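/- Let L be a Hermitian n×n complex matrix, let Γ be a density matrix on ℂⁿ, let γ be the orthogonal projection onto the first basis vector, and set α = tr((I−γ)Γ). Then |tr(ΓL) − tr(γL)| ≤ 4‖L‖√α. -/

import Mathlib

open Matrix ComplexOrder

/-- The operator norm of a matrix induced by the Euclidean norm on `ℂⁿ`. -/
noncomputable def euclideanOpNorm {n : ℕ} (L : Matrix (Fin n) (Fin n) ℂ) : ℝ :=
  ‖Matrix.toEuclideanCLM (𝕜 := ℂ) L‖

namespace TDHB
open scoped MatrixOrder
variable {m : ℕ}

lemma opNorm_nonneg (L : Matrix (Fin m) (Fin m) ℂ) : 0 ≤ euclideanOpNorm L := norm_nonneg _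

lemma col_sq_sum_le (L : Matrix (Fin m) (Fin m) ℂ) (i₀ : Fin m) :
    ∑ k, ‖L k i₀‖ ^ 2 ≤ euclideanOpNorm L ^ 2 := by
  set y : EuclideanSpace ℂ (Fin m) := WithLp.toLp 2 (Pi.single i₀ 1) with hy
  have hyn : ‖y‖ = 1 := by
    rw [hy]
    have : (WithLp.toLp 2 (Pi.single i₀ 1) : EuclideanSpace ℂ (Fin m))
        = EuclideanSpace.single i₀ (1 : ℂ) := rfl
    rw [this, EuclideanSpace.norm_single]
    simp
  have hTy : Matrix.toEuclideanCLM (𝕜 := ℂ) L y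
      = WithLp.toLp 2 (fun k => L k i₀) := by
    rw [hy, Matrix.toEuclideanCLM_toLp]
    congr 1
    rw [Matrix.mulVec_single]
    simp
    rfl
  have h1 : Real.sqrt (∑ k, ‖L k i₀‖ ^ 2) ≤ euclideanOpNorm L := by
    have h2 := (Matrix.toEuclideanCLM (𝕜 := ℂ) L).le_opNorm y
    rw [hyn, mul_one, hTy] at h2
    rw [EuclideanSpace.norm_eq] at h2
    exact h2
  calc ∑ k, ‖L k i₀‖ ^ 2
      = Real.sqrt (∑ k, ‖L k i₀‖ ^ 2) ^ 2 := by
        rw [Real.sq_sqrt (by positivity)]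
    _ ≤ euclideanOpNorm L ^ 2 := by
        gcongr

lemma diag_re_eq {B : Matrix (Fin m) (Fin m) ℂ} (hB : B.PosSemidef) (i : Fin m) :
    (B i i).re = ∑ k, ‖CFC.sqrt B k i‖ ^ 2 := by
  set S := CFC.sqrt B with hSdef
  have hBS : B = S * S := (CFC.sqrt_mul_sqrt_self B (Matrix.nonneg_iff_posSemidef.mpr hB)).symm
  have hSH : Sᴴ = S := (Matrix.nonneg_iff_posSemidef.mp (CFC.sqrt_nonneg B)).isHermitian
  have : B i i = ∑ k, (‖S k i‖ ^ 2 : ℂ) := by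
    rw [hBS, Matrix.mul_apply]
    refine Finset.sum_congr rfl fun k _ => ?_
    rw [show S i k = (starRingEnd ℂ) (S k i) by
      rw [← hSH, Matrix.conjTranspose_apply, hSH, starRingEnd_apply]]
    rw [← Complex.normSq_eq_conj_mul_self]
    norm_cast
    rw [Complex.sq_norm]
  rw [this]
  simp [← Complex.ofReal_pow]

lemma diag_re_nonneg {B : Matrix (Fin m) (Fin m) ℂ} (hB : B.PosSemidef) (i : Fin m) :
    0 ≤ (B i i).re := by
  rw [diag_re_eq hB i]; positivity

lemma abs_entry_le {B : Matrix (Fin m) (Fin m) ℂ} (hB : B.PosSemidef) (i j : Fin m) :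
    ‖B i j‖ ≤ Real.sqrt ((B i i).re) * Real.sqrt ((B j j).re) := by
  set S := CFC.sqrt B with hSdef
  have hBS : B = S * S := (CFC.sqrt_mul_sqrt_self B (Matrix.nonneg_iff_posSemidef.mpr hB)).symm
  have hSH : Sᴴ = S := (Matrix.nonneg_iff_posSemidef.mp (CFC.sqrt_nonneg B)).isHermitian
  set u : EuclideanSpace ℂ (Fin m) := WithLp.toLp 2 (fun k => S k i) with hu
  set v : EuclideanSpace ℂ (Fin m) := WithLp.toLp 2 (fun k => S k j) with hv
  have h1 : B i j = inner ℂ u v := by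
    rw [hBS, Matrix.mul_apply, PiLp.inner_apply]
    refine Finset.sum_congr rfl fun k _ => ?_
    rw [RCLike.inner_apply']
    rw [show S i k = (starRingEnd ℂ) (S k i) by
      rw [← hSH, Matrix.conjTranspose_apply, hSH, starRingEnd_apply]]
  have hun : ‖u‖ = Real.sqrt ((B i i).re) := by
    rw [EuclideanSpace.norm_eq, diag_re_eq hB i]
  have hvn : ‖v‖ = Real.sqrt ((B j j).re) := by
    rw [EuclideanSpace.norm_eq, diag_re_eq hB j]
  calc ‖B i j‖ = ‖(inner ℂ u v : ℂ)‖ := by rw [h1]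
    _ ≤ ‖u‖ * ‖v‖ := norm_inner_le_norm _ _
    _ = _ := by rw [hun, hvn]

lemma abs_quadform_le (L : Matrix (Fin m) (Fin m) ℂ) (x : Fin m → ℂ) :
    ‖∑ j, (starRingEnd ℂ) (x j) * ∑ k, L j k * x k‖
      ≤ euclideanOpNorm L * ∑ j, ‖x j‖ ^ 2 := by
  set y : EuclideanSpace ℂ (Fin m) := WithLp.toLp 2 x with hy
  have h1 : (inner ℂ y (Matrix.toEuclideanCLM (𝕜 := ℂ) L y) : ℂ)
      = ∑ j, (starRingEnd ℂ) (x j) * ∑ k, L j k * x k := by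
    rw [hy, Matrix.toEuclideanCLM_toLp, PiLp.inner_apply]
    refine Finset.sum_congr rfl fun j _ => ?_
    simp [RCLike.inner_apply', Matrix.toLin'_apply, Matrix.mulVec, dotProduct]
    ring
  have hny : ‖y‖ ^ 2 = ∑ j, ‖x j‖ ^ 2 := by
    rw [EuclideanSpace.norm_eq, Real.sq_sqrt (by positivity)]
  calc ‖∑ j, (starRingEnd ℂ) (x j) * ∑ k, L j k * x k‖
      = ‖(inner ℂ y (Matrix.toEuclideanCLM (𝕜 := ℂ) L y) : ℂ)‖ := by rw [h1]
    _ ≤ ‖y‖ * ‖Matrix.toEuclideanCLM (𝕜 := ℂ) L y‖ := norm_inner_le_norm _ _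
    _ ≤ ‖y‖ * (euclideanOpNorm L * ‖y‖) := by
        gcongr; exact (Matrix.toEuclideanCLM (𝕜 := ℂ) L).le_opNorm y
    _ = euclideanOpNorm L * ‖y‖ ^ 2 := by ring
    _ = _ := by rw [hny]

lemma abs_trace_psd_mul_le {B : Matrix (Fin m) (Fin m) ℂ} (L : Matrix (Fin m) (Fin m) ℂ)
    (hB : B.PosSemidef) :
    ‖(B * L).trace‖ ≤ euclideanOpNorm L * (B.trace).re := by
  set S := CFC.sqrt B with hSdef
  have hSH : Sᴴ = S := (Matrix.nonneg_iff_posSemidef.mp (CFC.sqrt_nonneg B)).isHermitian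
  have hBS : B = S * S := (CFC.sqrt_mul_sqrt_self B (Matrix.nonneg_iff_posSemidef.mpr hB)).symm
  have htr : (B * L).trace = (S * L * S).trace := by
    rw [hBS, Matrix.mul_assoc, Matrix.trace_mul_comm]
  have key : ∀ i, (S * L * S) i i = ∑ j, (starRingEnd ℂ) (S j i) * ∑ k, L j k * S k i := by
    intro i
    rw [Matrix.mul_assoc]
    simp only [Matrix.mul_apply]
    refine Finset.sum_congr rfl fun j _ => ?_
    congr 1
    rw [← hSH, Matrix.conjTranspose_apply, hSH, starRingEnd_apply]
  have htrB : (B.trace).re = ∑ i, ∑ j, ‖S j i‖ ^ 2 := by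
    have : B.trace = ∑ i, ∑ j, (‖S j i‖ ^ 2 : ℂ) := by
      rw [hBS, Matrix.trace]
      refine Finset.sum_congr rfl fun i _ => ?_
      rw [Matrix.diag_apply, Matrix.mul_apply]
      refine Finset.sum_congr rfl fun j _ => ?_
      rw [show S i j = (starRingEnd ℂ) (S j i) by
        rw [← hSH, Matrix.conjTranspose_apply, hSH, starRingEnd_apply]]
      rw [← Complex.normSq_eq_conj_mul_self]
      norm_cast
      rw [Complex.sq_norm]
    rw [this]
    simp [← Complex.ofReal_pow]
  calc ‖(B * L).trace‖
      = ‖∑ i, (S * L * S) i i‖ := by rw [htr]; rfl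
    _ ≤ ∑ i, ‖(S * L * S) i i‖ := by
        simpa using
          norm_sum_le Finset.univ (fun i => (S * L * S) i i)
    _ ≤ ∑ i, euclideanOpNorm L * ∑ j, ‖S j i‖ ^ 2 := by
        refine Finset.sum_le_sum fun i _ => ?_
        rw [key i]
        exact abs_quadform_le L (fun j => S j i)
    _ = euclideanOpNorm L * (B.trace).re := by
        rw [htrB, Finset.mul_sum]

end TDHB

open TDHB in
theorem trace_diff_hermitian_bound {n : ℕ} (L Γ : Matrix (Fin (n + 1)) (Fin (n + 1)) ℂ)
    (hL : Lᴴ = L) (hΓ : Γ.PosSemidef) (hΓtr : Γ.trace = 1)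
    (α : ℝ)
    (hα : α = ((1 - Matrix.single (0 : Fin (n + 1)) 0 (1 : ℂ)) * Γ).trace.re) :
    ‖(Γ * L).trace - (Matrix.single (0 : Fin (n + 1)) 0 (1 : ℂ) * L).trace‖
      ≤ 4 * euclideanOpNorm L * Real.sqrt α := by
  set N := euclideanOpNorm L with hNdef
  have hN0 : 0 ≤ N := opNorm_nonneg L
  set d : Fin (n + 1) → ℂ := fun i => if i = 0 then 0 else 1 with hd
  have hP : (1 : Matrix (Fin (n + 1)) (Fin (n + 1)) ℂ) - Matrix.single 0 0 (1 : ℂ)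
      = Matrix.diagonal d := by
    ext i j
    simp only [Matrix.sub_apply, Matrix.one_apply, Matrix.single, Matrix.of_apply,
      Matrix.diagonal_apply, hd]
    by_cases hij : i = j
    · subst hij
      by_cases h0 : i = 0 <;> simp [h0]
      · exact fun h => absurd h.symm h0
    · have hne : ¬((0 : Fin (n+1)) = i ∧ (0 : Fin (n+1)) = j) := by
        rintro ⟨rfl, rfl⟩; exact hij rfl
      simp [hij, hne]
  -- trace of γ L
  have hγL : (Matrix.single (0 : Fin (n + 1)) 0 (1 : ℂ) * L).trace = L 0 0 := by
    simp [Matrix.trace, Matrix.mul_apply, Matrix.single, ite_and]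
  -- α as a sum
  have hαeq : α = ∑ j : Fin n, (Γ j.succ j.succ).re := by
    rw [hα, hP]
    have : (Matrix.diagonal d * Γ).trace = ∑ j : Fin n, Γ j.succ j.succ := by
      simp [Matrix.trace, Matrix.diagonal_mul, Fin.sum_univ_succ, hd, Fin.succ_ne_zero]
    rw [this, Complex.re_sum]
  have hα0 : 0 ≤ α := by
    rw [hαeq]; exact Finset.sum_nonneg fun j _ => diag_re_nonneg hΓ _
  have hΓ00nn : 0 ≤ (Γ 0 0).re := diag_re_nonneg hΓ 0
  have hsum_re : (Γ 0 0).re + ∑ j : Fin n, (Γ j.succ j.succ).re = 1 := by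
    have h := congrArg Complex.re hΓtr
    rw [Matrix.trace, Fin.sum_univ_succ] at h
    simpa [Complex.re_sum] using h
  have hΓ00re : (Γ 0 0).re = 1 - α := by rw [hαeq]; linarith
  have hα1 : α ≤ 1 := by linarith
  have hΓ00c : Γ 0 0 = ((Γ 0 0).re : ℂ) := by
    have h := hΓ.isHermitian
    have : (starRingEnd ℂ) (Γ 0 0) = Γ 0 0 := by
      conv_rhs => rw [← h]
      rw [Matrix.conjTranspose_apply, starRingEnd_apply]
    exact (Complex.conj_eq_iff_re.mp this).symm
  -- B := (1-γ) Γ (1-γ)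
  set B := Matrix.diagonal d * Γ * Matrix.diagonal d with hBdef
  have hstar : star d = d := by
    funext i
    by_cases h0 : i = 0 <;> simp [hd, h0]
  have hdH : (Matrix.diagonal d)ᴴ = Matrix.diagonal d := by
    rw [Matrix.diagonal_conjTranspose, hstar]
  have hBpsd : B.PosSemidef := by
    have := hΓ.mul_mul_conjTranspose_same (Matrix.diagonal d)
    rwa [hdH] at this
  have hBtr : (B.trace).re = α := by
    have : B.trace = ∑ j : Fin n, Γ j.succ j.succ := by
      simp [hBdef, Matrix.trace, Matrix.diagonal_mul, Matrix.mul_diagonal, Fin.sum_univ_succ,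
        hd, Fin.succ_ne_zero]
    rw [this, Complex.re_sum, hαeq]
  have hBij : ∀ i j, B i j = d i * Γ i j * d j := by
    intro i j
    rw [hBdef, Matrix.mul_diagonal, Matrix.diagonal_mul]
  have hBL : (B * L).trace
      = ∑ i : Fin n, ∑ j : Fin n, Γ i.succ j.succ * L j.succ i.succ := by
    simp only [Matrix.trace, Matrix.diag_apply, Matrix.mul_apply, hBij]
    rw [Fin.sum_univ_succ]
    simp [Fin.sum_univ_succ, hd, Fin.succ_ne_zero]
  set T2 := ∑ j : Fin n, Γ 0 j.succ * L j.succ 0 with hT2def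
  set T3 := ∑ i : Fin n, Γ i.succ 0 * L 0 i.succ with hT3def
  set T4 := ∑ i : Fin n, ∑ j : Fin n, Γ i.succ j.succ * L j.succ i.succ with hT4def
  have hΓL : (Γ * L).trace = Γ 0 0 * L 0 0 + T2 + T3 + T4 := by
    rw [hT2def, hT3def, hT4def]
    simp only [Matrix.trace, Matrix.diag_apply, Matrix.mul_apply]
    rw [Fin.sum_univ_succ]
    simp only [Fin.sum_univ_succ, Finset.sum_add_distrib]
    ring
  have hsplit : (Γ * L).trace - (Matrix.single (0 : Fin (n + 1)) 0 (1 : ℂ) * L).trace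
      = (Γ 0 0 - 1) * L 0 0 + T2 + T3 + T4 := by
    rw [hΓL, hγL]; ring
  -- bounds
  have hL00 : ‖L 0 0‖ ≤ N := by
    have h1 : ‖L 0 0‖ ^ 2 ≤ N ^ 2 :=
      le_trans (Finset.single_le_sum (f := fun k => ‖L k 0‖ ^ 2)
        (fun _ _ => by positivity) (Finset.mem_univ 0)) (col_sq_sum_le L 0)
    have := Real.sqrt_le_sqrt h1
    rwa [Real.sqrt_sq (by positivity), Real.sqrt_sq hN0] at this
  have hcols : Real.sqrt (∑ j : Fin n, ‖L j.succ 0‖ ^ 2) ≤ N := by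
    have h2 : ∑ j : Fin n, ‖L j.succ 0‖ ^ 2 ≤ N ^ 2 := by
      refine le_trans ?_ (col_sq_sum_le L 0)
      rw [Fin.sum_univ_succ]
      exact le_add_of_nonneg_left (by positivity)
    have := Real.sqrt_le_sqrt h2
    rwa [Real.sqrt_sq hN0] at this
  have hsqrt1 : Real.sqrt ((Γ 0 0).re) ≤ 1 := by
    rw [show (1 : ℝ) = Real.sqrt 1 by simp]
    exact Real.sqrt_le_sqrt (by linarith)
  have hT2b : ‖T2‖ ≤ Real.sqrt α * N := by
    calc ‖T2‖ ≤ ∑ j : Fin n, ‖Γ 0 j.succ * L j.succ 0‖ := by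
          simpa using
            norm_sum_le Finset.univ (fun j : Fin n => Γ 0 j.succ * L j.succ 0)
      _ = ∑ j : Fin n, ‖Γ 0 j.succ‖ * ‖L j.succ 0‖ := by
          simp [_root_.map_mul]
      _ ≤ ∑ j : Fin n, (Real.sqrt ((Γ 0 0).re) * Real.sqrt ((Γ j.succ j.succ).re))
            * ‖L j.succ 0‖ := by
          refine Finset.sum_le_sum fun j _ => ?_
          exact mul_le_mul_of_nonneg_right (abs_entry_le hΓ 0 j.succ) (by positivity)
      _ = Real.sqrt ((Γ 0 0).re)
            * ∑ j : Fin n, Real.sqrt ((Γ j.succ j.succ).re) * ‖L j.succ 0‖ := by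
          rw [Finset.mul_sum]; exact Finset.sum_congr rfl fun j _ => by ring
      _ ≤ 1 * (Real.sqrt (∑ j : Fin n, (Γ j.succ j.succ).re)
            * Real.sqrt (∑ j : Fin n, ‖L j.succ 0‖ ^ 2)) := by
          refine mul_le_mul hsqrt1 ?_ ?_ (by norm_num)
          · have h := Real.sum_mul_le_sqrt_mul_sqrt (Finset.univ : Finset (Fin n))
              (fun j => Real.sqrt ((Γ j.succ j.succ).re)) (fun j => ‖L j.succ 0‖)
            calc ∑ j : Fin n, Real.sqrt ((Γ j.succ j.succ).re) * ‖L j.succ 0‖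
                ≤ Real.sqrt (∑ j : Fin n, Real.sqrt ((Γ j.succ j.succ).re) ^ 2)
                  * Real.sqrt (∑ j : Fin n, ‖L j.succ 0‖ ^ 2) := h
              _ = _ := by
                  congr 2
                  refine Finset.sum_congr rfl fun j _ => ?_
                  exact Real.sq_sqrt (diag_re_nonneg hΓ _)
          · exact Finset.sum_nonneg fun j _ => by positivity
      _ ≤ 1 * (Real.sqrt α * N) := by
          rw [← hαeq]
          gcongr
      _ = Real.sqrt α * N := by ring
  have hT3b : ‖T3‖ ≤ Real.sqrt α * N := by
    have hconj : T3 = (starRingEnd ℂ) T2 := by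
      rw [hT2def, hT3def, map_sum]
      refine Finset.sum_congr rfl fun i _ => ?_
      rw [_root_.map_mul]
      congr 1
      · conv_lhs => rw [← hΓ.isHermitian]
        rw [Matrix.conjTranspose_apply, starRingEnd_apply]
      · conv_lhs => rw [← hL]
        rw [Matrix.conjTranspose_apply, starRingEnd_apply]
    rw [hconj, Complex.norm_conj]
    exact hT2b
  have hT4b : ‖T4‖ ≤ N * α := by
    rw [← hBL]
    have := abs_trace_psd_mul_le L hBpsd
    rwa [hBtr] at this
  have hT1b : ‖(Γ 0 0 - 1) * L 0 0‖ ≤ α * N := by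
    have h1 : Γ 0 0 - 1 = ((-α : ℝ) : ℂ) := by
      rw [hΓ00c, hΓ00re]; push_cast; ring
    rw [norm_mul, h1, Complex.norm_real, Real.norm_eq_abs, abs_neg, abs_of_nonneg hα0]
    exact mul_le_mul_of_nonneg_left hL00 hα0
  have hsa1 : Real.sqrt α ≤ 1 := by
    rw [show (1 : ℝ) = Real.sqrt 1 by simp]
    exact Real.sqrt_le_sqrt hα1
  have hαsq : α ≤ Real.sqrt α := by
    nlinarith [Real.sq_sqrt hα0, Real.sqrt_nonneg α]
  rw [hsplit]
  calc ‖(Γ 0 0 - 1) * L 0 0 + T2 + T3 + T4‖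
      ≤ ‖(Γ 0 0 - 1) * L 0 0‖ + ‖T2‖ + ‖T3‖
        + ‖T4‖ := by
        refine le_trans (norm_add_le _ _) ?_
        gcongr
        refine le_trans (norm_add_le _ _) ?_
        gcongr
        exact norm_add_le _ _
    _ ≤ α * N + Real.sqrt α * N + Real.sqrt α * N + N * α := by
        gcongr
    _ ≤ 4 * N * Real.sqrt α := by nlinarith [Real.sqrt_nonneg α]
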